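/- arXiv:1211.2125 — 3 statements merged into one kernel-verified Lean document; each statement's English description precedes it below -/
import Mathlib

section
/- Let ω ∈ ℝ^d with ω·ν ≠ 0 for all nonzero ν ∈ ℤ^d, and suppose that lim_{n→∞} 2^{-n} log(1/α_n(ω)) = 0, where α_n(ω) := min{|ω·ν| : 0 < |ν| ≤ 2^n}. Then for every ξ > 0 there exists a constant C₀ > 0 such that C₀ |ω·ν| ≥ e^{-ξ|ν|} for all nonzero ν ∈ ℤ^d. -/
open scoped BigOperators

noncomputable def alphaSeq (d : ℕ) (ω : Fin d → ℝ) (n : ℕ) : ℝ :=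
  sInf {x : ℝ | ∃ ν : Fin d → ℤ, ν ≠ 0 ∧ (∑ i, (ν i).natAbs) ≤ 2 ^ n ∧
    x = |∑ i, ω i * (ν i : ℝ)|}

def AlphaSetAux (d : ℕ) (ω : Fin d → ℝ) (n : ℕ) : Set ℝ :=
  {x : ℝ | ∃ ν : Fin d → ℤ, ν ≠ 0 ∧ (∑ i, (ν i).natAbs) ≤ 2 ^ n ∧
    x = |∑ i, ω i * (ν i : ℝ)|}

lemma alphaSeq_eq (d : ℕ) (ω : Fin d → ℝ) (n : ℕ) :
    alphaSeq d ω n = sInf (AlphaSetAux d ω n) := rfl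

lemma SSet_finite (d : ℕ) (ω : Fin d → ℝ) (n : ℕ) : (AlphaSetAux d ω n).Finite := by
  have h1 : AlphaSetAux d ω n ⊆ (fun ν : Fin d → ℤ => |∑ i, ω i * (ν i : ℝ)|) ''
      (Set.pi Set.univ fun _ : Fin d => Set.Icc (-(2 ^ n : ℤ)) (2 ^ n)) := by
    rintro x ⟨ν, hν0, hνsum, rfl⟩
    refine ⟨ν, fun i _ => ?_, rfl⟩
    have hle : (ν i).natAbs ≤ 2 ^ n :=
      le_trans (Finset.single_le_sum (f := fun j => (ν j).natAbs)
        (fun j _ => Nat.zero_le _) (Finset.mem_univ i)) hνsum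
    have habs : |ν i| ≤ (2 : ℤ) ^ n := by
      rw [Int.abs_eq_natAbs]; exact_mod_cast hle
    exact Set.mem_Icc.mpr (abs_le.mp habs)
  exact Set.Finite.subset ((Set.Finite.pi fun i => Set.finite_Icc _ _).image _) h1

lemma SSet_nonempty (d : ℕ) (hd : 0 < d) (ω : Fin d → ℝ) (n : ℕ) :
    (AlphaSetAux d ω n).Nonempty := by
  refine ⟨_, (Pi.single (⟨0, hd⟩ : Fin d) (1 : ℤ) : Fin d → ℤ), ?_, ?_, rfl⟩
  · intro h
    have := congrFun h ⟨0, hd⟩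
    simp at this
  · have h1 : (∑ i, (((Pi.single (⟨0, hd⟩ : Fin d) (1 : ℤ) : Fin d → ℤ)) i).natAbs) = 1 := by
      simp [Pi.single_apply, apply_ite Int.natAbs]
    rw [h1]
    exact Nat.one_le_two_pow

lemma SSet_bddBelow (d : ℕ) (ω : Fin d → ℝ) (n : ℕ) : BddBelow (AlphaSetAux d ω n) :=
  ⟨0, by rintro x ⟨ν, _, _, rfl⟩; exact abs_nonneg _⟩

theorem stmt2 (d : ℕ) (hd : 0 < d) (ω : Fin d → ℝ)
    (hω : ∀ ν : Fin d → ℤ, ν ≠ 0 → (∑ i, ω i * (ν i : ℝ)) ≠ 0)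
    (hlim : Filter.Tendsto (fun n : ℕ => (2 : ℝ)⁻¹ ^ n * Real.log (1 / alphaSeq d ω n))
      Filter.atTop (nhds 0)) :
    ∀ ξ : ℝ, 0 < ξ → ∃ C₀ : ℝ, 0 < C₀ ∧ ∀ ν : Fin d → ℤ, ν ≠ 0 →
      Real.exp (-ξ * (∑ i, (ν i).natAbs : ℝ)) ≤ C₀ * |∑ i, ω i * (ν i : ℝ)| := by
  intro ξ hξ
  have hmem : ∀ n, alphaSeq d ω n ∈ AlphaSetAux d ω n := fun n =>
    (alphaSeq_eq d ω n) ▸ (SSet_nonempty d hd ω n).csInf_mem (SSet_finite d ω n)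
  have hpos : ∀ n, 0 < alphaSeq d ω n := by
    intro n
    obtain ⟨ν, hν0, _, h⟩ := hmem n
    rw [h]
    exact abs_pos.mpr (hω ν hν0)
  have hle : ∀ n (ν : Fin d → ℤ), ν ≠ 0 → (∑ i, (ν i).natAbs) ≤ 2 ^ n →
      alphaSeq d ω n ≤ |∑ i, ω i * (ν i : ℝ)| := fun n ν h1 h2 =>
    (alphaSeq_eq d ω n) ▸ csInf_le (SSet_bddBelow d ω n) ⟨ν, h1, h2, rfl⟩
  obtain ⟨N, hN⟩ := (Metric.tendsto_atTop.mp hlim) (ξ / 2) (by positivity)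
  have hα : ∀ n, N ≤ n → Real.exp (-(ξ * 2 ^ n / 2)) ≤ alphaSeq d ω n := by
    intro n hn
    have h1 := hN n hn
    rw [Real.dist_eq, sub_zero] at h1
    have h2 : (2 : ℝ)⁻¹ ^ n * Real.log (1 / alphaSeq d ω n) < ξ / 2 :=
      lt_of_le_of_lt (le_abs_self _) h1
    have hp : (0 : ℝ) < 2 ^ n := by positivity
    rw [inv_pow, inv_mul_lt_iff₀ hp, one_div, Real.log_inv] at h2
    calc Real.exp (-(ξ * 2 ^ n / 2)) ≤ Real.exp (Real.log (alphaSeq d ω n)) :=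
          Real.exp_le_exp.mpr (by nlinarith)
      _ = alphaSeq d ω n := Real.exp_log (hpos n)
  refine ⟨(alphaSeq d ω N)⁻¹ + 1, by have := hpos N; positivity, ?_⟩
  intro ν hν
  set m := ∑ i, (ν i).natAbs with hm
  have habs : (0 : ℝ) ≤ |∑ i, ω i * (ν i : ℝ)| := abs_nonneg _
  have hinv : (0 : ℝ) ≤ (alphaSeq d ω N)⁻¹ := (inv_pos.mpr (hpos N)).le
  have hcast : (∑ i, ((ν i).natAbs : ℝ)) = (m : ℝ) := by rw [hm]; push_cast; ring
  rw [hcast]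
  have hm1 : 1 ≤ m := by
    obtain ⟨i, hi⟩ := Function.ne_iff.mp hν
    calc 1 ≤ (ν i).natAbs := Int.natAbs_pos.mpr hi
      _ ≤ m := Finset.single_le_sum (f := fun j => (ν j).natAbs)
        (fun j _ => Nat.zero_le _) (Finset.mem_univ i)
  by_cases hcase : m ≤ 2 ^ N
  · have h1 : alphaSeq d ω N ≤ |∑ i, ω i * (ν i : ℝ)| := hle N ν hν hcase
    have h2 : Real.exp (-ξ * (m : ℝ)) ≤ 1 := by
      rw [Real.exp_le_one_iff]
      have : (0 : ℝ) ≤ ξ * m := by positivity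
      linarith
    have h3 : (1 : ℝ) ≤ ((alphaSeq d ω N)⁻¹ + 1) * |∑ i, ω i * (ν i : ℝ)| := by
      have h4 : (alphaSeq d ω N)⁻¹ * alphaSeq d ω N = 1 :=
        inv_mul_cancel₀ (hpos N).ne'
      nlinarith [hpos N]
    linarith
  · push_neg at hcase
    set n := Nat.clog 2 m with hn
    have hm2N : m ≤ 2 ^ n := Nat.le_pow_clog (by norm_num) m
    have hNn : N ≤ n := by
      by_contra h
      push_neg at h
      have : m ≤ 2 ^ N := le_trans hm2N (Nat.pow_le_pow_right (by norm_num) h.le)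
      omega
    have hm2 : 2 ≤ m := by
      have : 1 ≤ 2 ^ N := Nat.one_le_two_pow
      omega
    have hlow : 2 ^ (n - 1) < m := Nat.pow_pred_clog_lt_self (by norm_num) hm2
    have hn1 : 1 ≤ n := by
      rcases Nat.eq_zero_or_pos n with h | h
      · rw [h] at hm2N; omega
      · exact h
    have key : (2 : ℝ) ^ n / 2 ≤ (m : ℝ) := by
      have h2' : (2 : ℝ) ^ (n - 1) ≤ (m : ℝ) := by exact_mod_cast hlow.le
      have h2n : (2 : ℝ) ^ n = 2 ^ (n - 1) * 2 := by
        rw [← pow_succ]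
        congr 1
        omega
      linarith
    have hαn := hα n hNn
    have h1 : alphaSeq d ω n ≤ |∑ i, ω i * (ν i : ℝ)| := hle n ν hν hm2N
    have h2 : Real.exp (-ξ * (m : ℝ)) ≤ Real.exp (-(ξ * 2 ^ n / 2)) :=
      Real.exp_le_exp.mpr (by nlinarith)
    have hC : (1 : ℝ) ≤ (alphaSeq d ω N)⁻¹ + 1 := by linarith
    calc Real.exp (-ξ * (m : ℝ)) ≤ alphaSeq d ω n := h2.trans hαn
      _ ≤ |∑ i, ω i * (ν i : ℝ)| := h1
      _ ≤ ((alphaSeq d ω N)⁻¹ + 1) * |∑ i, ω i * (ν i : ℝ)| :=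
          le_mul_of_one_le_left habs hC
end

section
/- Fix a ∈ ℝ with a ≠ 0 and define D(ε, s) := -ε s² + i s + ε a for ε ∈ ℝ and s ∈ ℝ. Then for all ε with |ε| sufficiently small (depending only on a) and all s ∈ ℝ one has |D(ε, s)| ≥ max{|aε|, |s|}. -/
theorem stmt3 (a : ℝ) (ha : a ≠ 0) :
    ∃ ε₀ : ℝ, 0 < ε₀ ∧ ∀ ε : ℝ, |ε| ≤ ε₀ → ∀ s : ℝ,
      max |a * ε| |s| ≤ ‖(-(ε : ℂ) * s ^ 2 + Complex.I * s + ε * a : ℂ)‖ := by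
  have ha' : (0:ℝ) < 2 * |a| := by positivity
  refine ⟨1 / Real.sqrt (2 * |a|), by positivity, fun ε hε s => ?_⟩
  set z : ℂ := -(ε : ℂ) * s ^ 2 + Complex.I * s + ε * a with hz
  have hsq : ‖z‖ ^ 2 = (ε * a - ε * s ^ 2) ^ 2 + s ^ 2 := by
    rw [Complex.sq_norm, hz, Complex.normSq_apply]
    simp [Complex.add_re, Complex.add_im, Complex.mul_re, Complex.mul_im,
      ← Complex.ofReal_pow]
    ring
  have hA : 0 ≤ ‖z‖ := norm_nonneg z
  -- bound on ε²
  have hεsq : ε ^ 2 ≤ 1 / (2 * |a|) := by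
    have h1 : |ε| ^ 2 ≤ (1 / Real.sqrt (2 * |a|)) ^ 2 := by
      apply pow_le_pow_left₀ (abs_nonneg ε) hε
    have h2 : (1 / Real.sqrt (2 * |a|)) ^ 2 = 1 / (2 * |a|) := by
      rw [div_pow, one_pow, Real.sq_sqrt ha'.le]
    rw [sq_abs] at h1
    linarith [h1, h2.symm ▸ h1]
  rw [max_le_iff]
  constructor
  · -- |a*ε| ≤ abs z
    have key : (a * ε) ^ 2 ≤ ‖z‖ ^ 2 := by
      rw [hsq]
      have hterm : 0 ≤ s ^ 2 * (1 - 2 * a * ε ^ 2 + ε ^ 2 * s ^ 2) := by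
        have : 2 * a * ε ^ 2 ≤ 1 := by
          have h2 : 2 * a * ε ^ 2 ≤ 2 * |a| * ε ^ 2 := by
            nlinarith [le_abs_self a, sq_nonneg ε]
          have h3 : 2 * |a| * ε ^ 2 ≤ 2 * |a| * (1 / (2 * |a|)) := by
            nlinarith
          rw [mul_one_div, div_self ha'.ne'] at h3
          linarith
        nlinarith [sq_nonneg s, sq_nonneg (ε * s)]
      nlinarith
    nlinarith [sq_abs (a * ε), abs_nonneg (a * ε)]
  · have key : s ^ 2 ≤ ‖z‖ ^ 2 := by
      rw [hsq]; nlinarith [sq_nonneg (ε * a - ε * s ^ 2)]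
    nlinarith [sq_abs s, abs_nonneg s]
end

section
/- Let b ∈ ℝ with b ≠ 0, let n ≥ 1 be an integer, and define D_V(ε, s) := i s (1 + i ε s) + b ε^n for real ε, s. Then there exists ε₁ > 0 such that for all |ε| < ε₁ and all s ∈ ℝ one has |D_V(ε, s)| ≥ max{|s|, |b| |ε|^n}. -/
theorem stmt11 (b : ℝ) (hb : b ≠ 0) (n : ℕ) (hn : 1 ≤ n) :
    ∃ ε₁ : ℝ, 0 < ε₁ ∧ ∀ ε : ℝ, |ε| < ε₁ → ∀ s : ℝ,
      max |s| (|b| * |ε| ^ n) ≤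
        ‖Complex.I * s * (1 + Complex.I * ε * s) + (b : ℂ) * ε ^ n‖ := by
  have hb' : 0 < |b| := abs_pos.mpr hb
  refine ⟨min 1 (1 / (2 * |b|)), by positivity, ?_⟩
  intro ε hε s
  set z : ℂ := Complex.I * s * (1 + Complex.I * ε * s) + (b : ℂ) * ε ^ n with hz
  have hre : z.re = b * ε ^ n - ε * s ^ 2 := by
    simp [hz, ← Complex.ofReal_pow]; ring
  have him : z.im = s := by simp [hz, ← Complex.ofReal_pow]
  have h1 : |s| ≤ ‖z‖ := him ▸ Complex.abs_im_le_norm z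
  have hε1 : |ε| < 1 := lt_of_lt_of_le hε (min_le_left _ _)
  have hε2 : |ε| < 1 / (2 * |b|) := lt_of_lt_of_le hε (min_le_right _ _)
  have key : 2 * |b| * |ε| ^ (n + 1) ≤ 1 := by
    have h3 : |ε| ^ (n + 1) ≤ |ε| := pow_le_of_le_one (abs_nonneg _) hε1.le (by omega)
    have h4 : 2 * |b| * |ε| < 1 := by
      rw [div_eq_inv_mul] at hε2
      calc 2 * |b| * |ε| < 2 * |b| * ((2 * |b|)⁻¹ * 1) := by
            apply mul_lt_mul_of_pos_left _ (by positivity)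
            simpa using hε2
        _ = 1 := by field_simp
    nlinarith
  have habs : b * ε ^ (n + 1) ≤ |b| * |ε| ^ (n + 1) := by
    calc b * ε ^ (n + 1) ≤ |b * ε ^ (n + 1)| := le_abs_self _
      _ = |b| * |ε| ^ (n + 1) := by rw [abs_mul, abs_pow]
  have hsq : (|b| * |ε| ^ n) ^ 2 ≤ ‖z‖ ^ 2 := by
    rw [Complex.sq_norm, Complex.normSq_apply, hre, him]
    have e1 : (|b| * |ε| ^ n) ^ 2 = (b * ε ^ n) ^ 2 := by
      rw [mul_pow, mul_pow, sq_abs, ← abs_pow, sq_abs]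
    have e2 : ε ^ (n + 1) = ε ^ n * ε := pow_succ _ _
    rw [e1]
    have h5 : 0 ≤ s ^ 2 * (1 - 2 * (b * (ε ^ n * ε))) := by
      apply mul_nonneg (sq_nonneg s)
      rw [← pow_succ]
      linarith
    nlinarith [h5, sq_nonneg (ε * s ^ 2)]
  have h2 : |b| * |ε| ^ n ≤ ‖z‖ := by
    have := Real.sqrt_le_sqrt hsq
    rwa [Real.sqrt_sq (by positivity), Real.sqrt_sq (norm_nonneg z)] at this
  exact max_le h1 h2
end
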